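/- If G is a finite group such that for some n ≥ 2 and some permutation σ of {1,…,n} with σ not the identity, the number of n-tuples (a₁,…,aₙ) with a₁⋯aₙ = a_{σ(1)}⋯a_{σ(n)} exceeds (1/2 + 1/8)·|G|ⁿ, then G is abelian. (Case k = 1: σ is a single block transposition.) -/

import Mathlib

lemma eight_mul_commpairs_le (G : Type*) [Group G] [Finite G]
    (hna : ¬ ∀ a b : G, a * b = b * a) :
    8 * Nat.card {p : G × G // p.1 * p.2 = p.2 * p.1} ≤ 5 * Nat.card G ^ 2 := by
  classical
  have := Fintype.ofFinite G
  set Z := Subgroup.center G with hZdef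
  have hZt : Z ≠ ⊤ := by
    intro hZ
    refine hna fun a b => ?_
    have ha : a ∈ Z := by rw [hZ]; trivial
    exact (Subgroup.mem_center_iff.mp ha b).symm
  have habel : IsCyclic (G ⧸ Z) → False := by
    intro hc
    exact hna (commutative_of_cyclic_center_quotient (QuotientGroup.mk' Z)
      (by rw [QuotientGroup.ker_mk']))
  have hidx0 : Z.index ≠ 0 := Subgroup.index_ne_zero_of_finite
  have hidx1 : Z.index ≠ 1 := fun h => hZt (Subgroup.index_eq_one.mp h)
  have hidx : 4 ≤ Z.index := by
    rcases Nat.lt_or_ge Z.index 4 with hlt | hge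
    · exfalso
      interval_cases hi : Z.index
      · exact hidx0 rfl
      · exact hidx1 rfl
      · have : Nat.card (G ⧸ Z) = 2 := by rw [← Subgroup.index_eq_card, hi]
        exact habel (@isCyclic_of_prime_card _ _ _ ⟨Nat.prime_two⟩ this)
      · have : Nat.card (G ⧸ Z) = 3 := by rw [← Subgroup.index_eq_card, hi]
        exact habel (@isCyclic_of_prime_card _ _ _ ⟨Nat.prime_three⟩ this)
    · exact hge
  -- centralizer bound
  have hcent : ∀ g : G, g ∉ Z → 2 * Nat.card (Subgroup.centralizer {g}) ≤ Nat.card G := by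
    intro g hg
    have hC : Subgroup.centralizer {g} ≠ ⊤ := by
      intro h
      exact hg (Subgroup.mem_center_iff.mpr fun k =>
        Subgroup.mem_centralizer_singleton_iff.mp (h ▸ Subgroup.mem_top k))
    have h2 : 2 ≤ (Subgroup.centralizer {g}).index := by
      have h0 : (Subgroup.centralizer {g}).index ≠ 0 := Subgroup.index_ne_zero_of_finite
      have h1 : (Subgroup.centralizer {g}).index ≠ 1 := fun h => hC (Subgroup.index_eq_one.mp h)
      omega
    calc 2 * Nat.card (Subgroup.centralizer {g})
        ≤ (Subgroup.centralizer {g}).index * Nat.card (Subgroup.centralizer {g}) :=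
          Nat.mul_le_mul_right _ h2
      _ = Nat.card G := by rw [mul_comm]; exact Subgroup.card_mul_index _
  -- counting
  have hcount : Nat.card {p : G × G // p.1 * p.2 = p.2 * p.1}
      = ∑ g : G, Nat.card {k : G // g * k = k * g} := by
    rw [Nat.card_congr (Equiv.subtypeProdEquivSigmaSubtype fun a b : G => a * b = b * a),
      Nat.card_eq_fintype_card, Fintype.card_sigma]
    simp [Nat.card_eq_fintype_card]
  have hfib : ∀ g : G, Nat.card {k : G // g * k = k * g} = Nat.card (Subgroup.centralizer {g}) := by
    intro g
    apply Nat.card_congr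
    exact Equiv.subtypeEquivRight fun k => by
      rw [Subgroup.mem_centralizer_singleton_iff]; exact ⟨fun h => h.symm, fun h => h.symm⟩
  have hZle : 4 * Nat.card Z ≤ Nat.card G := by
    calc 4 * Nat.card Z ≤ Z.index * Nat.card Z := Nat.mul_le_mul_right _ hidx
      _ = Nat.card G := by rw [mul_comm]; exact Subgroup.card_mul_index _
  have hbound : ∀ g : G, 8 * Nat.card {k : G // g * k = k * g}
      ≤ if g ∈ Z then 8 * Nat.card G else 4 * Nat.card G := by
    intro g
    by_cases hg : g ∈ Z
    · simp only [if_pos hg]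
      have : Nat.card {k : G // g * k = k * g} ≤ Nat.card G :=
        Nat.card_le_card_of_injective (fun k => k.1) (fun a b h => Subtype.ext h)
      omega
    · simp only [if_neg hg]
      rw [hfib g]
      have := hcent g hg
      omega
  have hsum : ∑ g : G, (8 * Nat.card {k : G // g * k = k * g})
      ≤ ∑ g : G, (if g ∈ Z then 8 * Nat.card G else 4 * Nat.card G) :=
    Finset.sum_le_sum fun g _ => hbound g
  have hsplit : ∑ g : G, (if g ∈ Z then 8 * Nat.card G else 4 * Nat.card G)
      = (Finset.univ.filter (· ∈ Z)).card * (8 * Nat.card G)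
        + (Finset.univ.filter (¬ · ∈ Z)).card * (4 * Nat.card G) := by
    rw [Finset.sum_ite, Finset.sum_const, Finset.sum_const]; simp
  have hZcard : (Finset.univ.filter (· ∈ Z)).card = Nat.card Z := by
    rw [Nat.card_eq_fintype_card, ← Fintype.card_subtype]
  have hNcard : (Finset.univ.filter (¬ · ∈ Z)).card + Nat.card Z = Nat.card G := by
    rw [← hZcard, add_comm, Finset.card_filter_add_card_filter_not, Finset.card_univ,
      Nat.card_eq_fintype_card]
  have key : 8 * Nat.card {p : G × G // p.1 * p.2 = p.2 * p.1} ≤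
      Nat.card Z * (8 * Nat.card G) + (Finset.univ.filter (¬ · ∈ Z)).card * (4 * Nat.card G) := by
    rw [hcount, Finset.mul_sum]
    calc ∑ g : G, 8 * Nat.card {k : G // g * k = k * g}
        ≤ _ := hsum
      _ = _ := hsplit
      _ = _ := by rw [hZcard]
  set z := Nat.card Z
  set c := Nat.card G
  set f := (Finset.univ.filter (¬ · ∈ Z)).card
  calc 8 * Nat.card {p : G × G // p.1 * p.2 = p.2 * p.1}
      ≤ z * (8 * c) + f * (4 * c) := key
    _ = (4 * z) * c + 4 * ((f + z) * c) := by ring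
    _ ≤ c * c + 4 * ((f + z) * c) := by gcongr
    _ = c * c + 4 * (c * c) := by rw [hNcard]
    _ = 5 * c ^ 2 := by ring


lemma key_count (G : Type*) [Group G] [Finite G] (n : ℕ) (σ : Equiv.Perm (Fin n))
    (hσ : σ ≠ 1) (CB : 8 * Nat.card {p : G × G // p.1 * p.2 = p.2 * p.1} ≤ 5 * Nat.card G ^ 2) :
    8 * Nat.card {a : Fin n → G // (List.ofFn a).prod = (List.ofFn fun i => a (σ i)).prod}
      ≤ 5 * Nat.card G ^ n := by
  classical
  set P : (Fin n → G) → Prop := fun a => (List.ofFn a).prod = (List.ofFn fun i => a (σ i)).prod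
    with hP
  -- find minimal moved point
  have hex : ∃ i, σ i ≠ i := by
    by_contra hc
    push_neg at hc
    exact hσ (Equiv.ext fun i => by simp [hc i])
  set Mv : Finset (Fin n) := Finset.univ.filter (fun i => σ i ≠ i) with hMv
  have hne : Mv.Nonempty := ⟨hex.choose, by simp [hMv, hex.choose_spec]⟩
  set m : Fin n := Mv.min' hne with hmdef
  have hm : σ m ≠ m := by
    have := Mv.min'_mem hne
    simp [hMv] at this
    exact this
  have hlow : ∀ i : Fin n, i < m → σ i = i := by
    intro i hi
    by_contra hci
    exact absurd (Mv.min'_le i (by simp [hMv, hci])) (not_le.mpr hi)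
  set s : Fin n := σ⁻¹ m with hsdef
  set t : Fin n := σ m with htdef
  have hts : σ s = m := by simp [hsdef]
  have htm : t ≠ m := hm
  have hmt : m < t := by
    rcases lt_trichotomy m t with h | h | h
    · exact h
    · exact absurd h.symm htm
    · exact absurd (σ.injective ((hlow t h).trans htdef)) (fun hh => htm (hh ▸ rfl))
  have hsm : s ≠ m := by
    intro h
    rw [h] at hts
    exact hm hts
  have hms : m < s := by
    rcases lt_trichotomy m s with h | h | h
    · exact h
    · exact absurd h.symm hsm
    · exact absurd ((hlow s h).symm.trans hts) hsm
  -- lists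
  set l₁ : List (Fin n) := List.finRange n with hl₁
  set l₂ : List (Fin n) := l₁.map σ with hl₂
  have hl₁len : l₁.length = n := List.length_finRange
  have hl₂len : l₂.length = n := by simp [hl₂, hl₁]
  have getl₁ : ∀ (i : ℕ) (hi : i < n), l₁[i]'(by rw [hl₁len]; exact hi) = ⟨i, hi⟩ := by
    intro i hi
    simp [hl₁, List.getElem_finRange]
  have getl₂ : ∀ (i : ℕ) (hi : i < n), l₂[i]'(by rw [hl₂len]; exact hi) = σ ⟨i, hi⟩ := by
    intro i hi
    simp [hl₂, hl₁, List.getElem_finRange]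
  set mN : ℕ := (m : ℕ) with hmN
  set sN : ℕ := (s : ℕ) with hsN
  have hmslt : mN < sN := hms
  set Dl : List (Fin n) := l₁.drop (mN+1) with hDl
  set Kl : List (Fin n) := (l₂.drop (mN+1)).take (sN - (mN+1)) with hKl
  set Wl : List (Fin n) := l₂.drop (sN+1) with hWl
  set D : (Fin n → G) → G := fun a => (Dl.map a).prod with hD
  set K : (Fin n → G) → G := fun a => (Kl.map a).prod with hK
  set W : (Fin n → G) → G := fun a => (Wl.map a).prod with hW
  set V : (Fin n → G) → G := fun a => a t * K a with hV
  -- memberships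
  have hmDl : m ∉ Dl := by
    rw [hDl, List.mem_iff_getElem]
    rintro ⟨i, hilt, hieq⟩
    have h2 : (mN+1) + i < n := by
      have : (l₁.drop (mN+1)).length = n - (mN+1) := by rw [List.length_drop, hl₁len]
      omega
    rw [List.getElem_drop, getl₁ ((mN+1)+i) h2] at hieq
    have := congrArg Fin.val hieq
    simp at this
    omega
  have hKlmem : ∀ x : Fin n, x ∈ Kl → ∃ (j : ℕ) (hj : mN + 1 + j < n),
      mN + 1 + j < sN ∧ x = σ ⟨mN+1+j, hj⟩ := by
    intro x hx
    rw [hKl, List.mem_iff_getElem] at hx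
    obtain ⟨j, hjlt, hjeq⟩ := hx
    have hlen : ((l₂.drop (mN+1)).take (sN - (mN+1))).length ≤ sN - (mN+1) := by
      rw [List.length_take]; omega
    have hjlt' : j < sN - (mN+1) := by omega
    have hj : mN + 1 + j < n := by
      have : sN < n := s.isLt
      omega
    refine ⟨j, hj, by omega, ?_⟩
    rw [List.getElem_take, List.getElem_drop, getl₂ ((mN+1)+j) hj] at hjeq
    exact hjeq.symm
  have hmKl : m ∉ Kl := by
    intro hx
    obtain ⟨j, hj, hjs, hjeq⟩ := hKlmem m hx
    have : (⟨mN+1+j, hj⟩ : Fin n) = s := σ.injective (by rw [← hjeq, hts])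
    have := congrArg Fin.val this
    simp [hsN] at this
    omega
  have htKl : t ∉ Kl := by
    intro hx
    obtain ⟨j, hj, hjs, hjeq⟩ := hKlmem t hx
    have : (⟨mN+1+j, hj⟩ : Fin n) = m := σ.injective (by rw [← hjeq, htdef])
    have := congrArg Fin.val this
    simp [hmN] at this
    omega
  have hmWl : m ∉ Wl := by
    rw [hWl, List.mem_iff_getElem]
    rintro ⟨i, hilt, hieq⟩
    have h2 : (sN+1) + i < n := by
      have : (l₂.drop (sN+1)).length = n - (sN+1) := by rw [List.length_drop, hl₂len]
      omega
    rw [List.getElem_drop, getl₂ ((sN+1)+i) h2] at hieq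
    have : (⟨sN+1+i, h2⟩ : Fin n) = s := σ.injective (by rw [hieq, hts])
    have := congrArg Fin.val this
    simp [hsN] at this
    omega
  -- update invariance
  have hupd : ∀ (l : List (Fin n)) (j : Fin n), j ∉ l → ∀ (a : Fin n → G) (x : G),
      (l.map (Function.update a j x)).prod = (l.map a).prod := by
    intro l j hj a x
    congr 1
    apply List.map_congr_left
    intro i hi
    exact Function.update_of_ne (fun h : i = j => hj (h ▸ hi)) _ _
  have hDupd : ∀ (a : Fin n → G) (x : G), D (Function.update a m x) = D a :=
    fun a x => hupd Dl m hmDl a x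
  have hKupdm : ∀ (a : Fin n → G) (x : G), K (Function.update a m x) = K a :=
    fun a x => hupd Kl m hmKl a x
  have hKupdt : ∀ (a : Fin n → G) (x : G), K (Function.update a t x) = K a :=
    fun a x => hupd Kl t htKl a x
  have hWupd : ∀ (a : Fin n → G) (x : G), W (Function.update a m x) = W a :=
    fun a x => hupd Wl m hmWl a x
  have hVupd : ∀ (a : Fin n → G) (x : G), V (Function.update a m x) = V a := by
    intro a x
    rw [hV]
    simp only []
    rw [hKupdm, Function.update_of_ne htm]
  -- list decompositions
  have hd₁ : l₁ = l₁.take mN ++ m :: Dl := by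
    conv_lhs => rw [← List.take_append_drop mN l₁]
    congr 1
    rw [List.drop_eq_getElem_cons (by rw [hl₁len]; exact m.isLt), getl₁ mN m.isLt]
  have harith : sN - mN = (sN - (mN+1)) + 1 := by omega
  have hd₂ : l₂ = l₂.take mN ++ ((t :: Kl) ++ (m :: Wl)) := by
    conv_lhs => rw [← List.take_append_drop mN l₂]
    congr 1
    have e2 : l₂.drop mN = (l₂.drop mN).take (sN - mN) ++ l₂.drop sN := by
      conv_lhs => rw [← List.take_append_drop (sN - mN) (l₂.drop mN)]
      rw [List.drop_drop, Nat.add_sub_cancel' hmslt.le]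
    have e3 : (l₂.drop mN).take (sN - mN) = t :: Kl := by
      rw [List.drop_eq_getElem_cons (by rw [hl₂len]; exact m.isLt), harith,
        List.take_succ_cons, getl₂ mN m.isLt]
    have e4 : l₂.drop sN = m :: Wl := by
      rw [List.drop_eq_getElem_cons (by rw [hl₂len]; exact s.isLt), getl₂ sN s.isLt, hts]
    rw [e2, e3, e4]
  have hprefix : l₂.take mN = l₁.take mN := by
    apply List.ext_getElem (by rw [List.length_take, List.length_take, hl₁len, hl₂len])
    intro i h1 h2
    have him : i < mN := by rw [List.length_take] at h1; omega
    have hin : i < n := by rw [List.length_take, hl₂len] at h1; omega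
    rw [List.getElem_take, List.getElem_take, getl₁ i hin, getl₂ i hin]
    exact hlow ⟨i, hin⟩ him
  -- algebraic step
  have hstep : ∀ x d v w : G, (x * d = v * (x * w)) ↔ (x⁻¹ * v⁻¹ * x = w * d⁻¹) := by
    intro x d v w
    constructor
    · intro hh
      have h1 : x⁻¹ * v⁻¹ * x = x⁻¹ * (v⁻¹ * (x * d)) * d⁻¹ := by simp [mul_assoc]
      rw [h1, hh]
      simp [mul_assoc]
    · intro hh
      have hw : w = x⁻¹ * (v⁻¹ * (x * d)) := by
        have h2 := congrArg (· * d) hh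
        simpa [mul_assoc] using h2.symm
      rw [hw]
      simp [mul_assoc]
  -- the key characterization
  have hkey : ∀ a : Fin n → G, P a ↔ (a m)⁻¹ * (V a)⁻¹ * a m = W a * (D a)⁻¹ := by
    intro a
    have hL : (List.ofFn a).prod = ((l₁.take mN).map a).prod * (a m * D a) := by
      rw [List.ofFn_eq_map, ← hl₁]
      conv_lhs => rw [hd₁]
      simp [mul_assoc, hD]
    have hR : (List.ofFn fun i => a (σ i)).prod
        = ((l₂.take mN).map a).prod * ((a t * K a) * (a m * W a)) := by
      have : (List.ofFn fun i => a (σ i)) = l₂.map a := by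
        rw [List.ofFn_eq_map, hl₂, List.map_map]
        rfl
      rw [this]
      conv_lhs => rw [hd₂]
      simp [mul_assoc, hK, hW]
    have : P a ↔ ((l₁.take mN).map a).prod * (a m * D a)
        = ((l₂.take mN).map a).prod * ((a t * K a) * (a m * W a)) := by
      rw [hP]
      simp only []
      rw [hL, hR]
    rw [this, hprefix, mul_right_inj, hV]
    simp only []
    exact hstep (a m) (D a) (a t * K a) (W a)
  -- choice of base solution
  obtain ⟨x₀, hx₀⟩ : ∃ x₀ : (Fin n → G) → G, ∀ b : Fin n → G,
      (∃ x, P (Function.update b m x)) → P (Function.update b m (x₀ b)) :=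
    ⟨fun b => if h : ∃ x, P (Function.update b m x) then h.choose else 1,
     fun b h => by simp only [dif_pos h]; exact h.choose_spec⟩
  set U := {q : G × G × (Fin n → G) //
    q.1 * q.2.1 = q.2.1 * q.1 ∧ q.2.2 m = 1 ∧ q.2.2 t = 1} with hUdef
  have hmem : ∀ a : Fin n → G, P a →
      V (Function.update a m 1) * (a m * (x₀ (Function.update a m 1))⁻¹)
        = (a m * (x₀ (Function.update a m 1))⁻¹) * V (Function.update a m 1) := by
    intro a ha
    set b := Function.update a m 1 with hb
    have hself : Function.update b m (a m) = a := by
      rw [hb, Function.update_idem, Function.update_eq_self]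
    have hex2 : ∃ x, P (Function.update b m x) := ⟨a m, by rw [hself]; exact ha⟩
    have hP0 := hx₀ b hex2
    set y := x₀ b with hy
    have e1 : (a m)⁻¹ * (V a)⁻¹ * a m = W a * (D a)⁻¹ := (hkey a).mp ha
    have e2' := (hkey _).mp hP0
    rw [Function.update_self] at e2'
    rw [hVupd, hWupd, hDupd] at e2'
    have hVb : V b = V a := by rw [hb, hVupd]
    have hWb : W b = W a := by rw [hb, hWupd]
    have hDb : D b = D a := by rw [hb, hDupd]
    rw [hVb, hWb, hDb] at e2'
    have e3 : (a m)⁻¹ * (V a)⁻¹ * a m = y⁻¹ * (V a)⁻¹ * y := e1.trans e2'.symm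
    rw [hVb]
    have e4 : (V a)⁻¹ * (a m * y⁻¹) = (a m * y⁻¹) * (V a)⁻¹ := by
      have h5 := congrArg (fun z => a m * z * y⁻¹) e3
      simpa [mul_assoc] using h5
    have e5 : Commute ((V a)⁻¹) (a m * y⁻¹) := e4
    have e6 := e5.inv_left
    rw [inv_inv] at e6
    exact e6
  have hrec : ∀ a : Fin n → G, Function.update
      (Function.update (Function.update a m 1) t 1) t (a t) = Function.update a m 1 := by
    intro a
    have h1 : a t = (Function.update a m 1) t := (Function.update_of_ne htm 1 a).symm
    rw [Function.update_idem, h1, Function.update_eq_self]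
  have hat : ∀ a : Fin n → G, a t = V (Function.update a m 1)
      * (K (Function.update (Function.update a m 1) t 1))⁻¹ := by
    intro a
    rw [hV]
    simp only []
    rw [hKupdt, Function.update_of_ne htm, mul_inv_cancel_right]
  have hrecm : ∀ a : Fin n → G, Function.update (Function.update a m 1) m (a m) = a := by
    intro a
    rw [Function.update_idem, Function.update_eq_self]
  have hinj : ∃ Φ : {a : Fin n → G // P a} → U, Function.Injective Φ := by
    refine ⟨fun a => ⟨(V (Function.update a.1 m 1),
      a.1 m * (x₀ (Function.update a.1 m 1))⁻¹,
      Function.update (Function.update a.1 m 1) t 1),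
      hmem a.1 a.2,
      by show Function.update (Function.update a.1 m 1) t 1 m = 1
         rw [Function.update_of_ne (Ne.symm htm), Function.update_self],
      Function.update_self _ _ _⟩, ?_⟩
    intro a₁ a₂ heq
    have hval := congrArg Subtype.val heq
    have h1 : V (Function.update a₁.1 m 1) = V (Function.update a₂.1 m 1) :=
      congrArg Prod.fst hval
    have h2 : a₁.1 m * (x₀ (Function.update a₁.1 m 1))⁻¹
        = a₂.1 m * (x₀ (Function.update a₂.1 m 1))⁻¹ :=
      congrArg (fun q => q.2.1) hval
    have h3 : Function.update (Function.update a₁.1 m 1) t 1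
        = Function.update (Function.update a₂.1 m 1) t 1 :=
      congrArg (fun q => q.2.2) hval
    have ht' : a₁.1 t = a₂.1 t := by
      rw [hat a₁.1, hat a₂.1, h1, h3]
    have hu : Function.update a₁.1 m 1 = Function.update a₂.1 m 1 := by
      rw [← hrec a₁.1, ← hrec a₂.1, h3, ht']
    have hm' : a₁.1 m = a₂.1 m := by
      rw [hu] at h2
      exact mul_right_cancel h2
    apply Subtype.ext
    rw [← hrecm a₁.1, ← hrecm a₂.1, hu, hm']
  obtain ⟨Φ, hΦ⟩ := hinj
  have hcard1 : Nat.card {a : Fin n → G // P a} ≤ Nat.card U :=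
    Nat.card_le_card_of_injective Φ hΦ
  set F := {f : Fin n → G // f m = 1 ∧ f t = 1} with hF
  have eqU : Nat.card U = Nat.card {p : G × G // p.1 * p.2 = p.2 * p.1} * Nat.card F := by
    rw [← Nat.card_prod]
    apply Nat.card_congr
    exact ⟨fun q => (⟨(q.1.1, q.1.2.1), q.2.1⟩, ⟨q.1.2.2, q.2.2.1, q.2.2.2⟩),
      fun p => ⟨(p.1.1.1, p.1.1.2, p.2.1), p.1.2, p.2.2.1, p.2.2.2⟩,
      fun q => rfl, fun p => rfl⟩
  have eqPow : Nat.card G ^ n = Nat.card G * (Nat.card G * Nat.card F) := by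
    have hfn : Nat.card (Fin n → G) = Nat.card G ^ n := by
      rw [Nat.card_fun]
      simp
    rw [← Nat.card_prod, ← Nat.card_prod, ← hfn]
    apply Nat.card_congr
    refine ⟨fun f => (f m, f t, ⟨Function.update (Function.update f m 1) t 1,
        by rw [Function.update_of_ne (Ne.symm htm), Function.update_self],
        Function.update_self _ _ _⟩),
      fun p => Function.update (Function.update p.2.2.1 t p.2.1) m p.1, ?_, ?_⟩
    · intro f
      show Function.update (Function.update
        (Function.update (Function.update f m 1) t 1) t (f t)) m (f m) = f
      rw [hrec f, hrecm f]
    · rintro ⟨x, y, f, hfm, hft⟩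
      have e1 : Function.update (Function.update f t y) m x m = x :=
        Function.update_self _ _ _
      have e2 : Function.update (Function.update f t y) m x t = y := by
        rw [Function.update_of_ne htm, Function.update_self]
      have e3 : Function.update (Function.update
          (Function.update (Function.update f t y) m x) m 1) t 1 = f := by
        funext i
        by_cases hi1 : i = m
        · subst hi1
          rw [Function.update_of_ne (Ne.symm htm), Function.update_self, hfm]
        · by_cases hi2 : i = t
          · subst hi2
            rw [Function.update_self, hft]
          · rw [Function.update_of_ne hi2, Function.update_of_ne hi1,
              Function.update_of_ne hi1, Function.update_of_ne hi2]
      show (Function.update (Function.update f t y) m x m,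
        Function.update (Function.update f t y) m x t,
        (⟨Function.update (Function.update
          (Function.update (Function.update f t y) m x) m 1) t 1, _⟩ : F))
        = (x, y, (⟨f, hfm, hft⟩ : F))
      rw [e1, e2]
      exact congrArg (fun z => (x, y, z)) (Subtype.ext e3)
  calc 8 * Nat.card {a : Fin n → G // P a}
      ≤ 8 * Nat.card U := by omega
    _ = 8 * Nat.card {p : G × G // p.1 * p.2 = p.2 * p.1} * Nat.card F := by
        rw [eqU, mul_assoc]
    _ ≤ 5 * Nat.card G ^ 2 * Nat.card F := Nat.mul_le_mul_right _ CB
    _ = 5 * Nat.card G ^ n := by rw [eqPow]; ring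


theorem abelian_of_word_count_gt (G : Type*) [Group G] [Finite G]
    (h : ∃ n : ℕ, 2 ≤ n ∧ ∃ σ : Equiv.Perm (Fin n), σ ≠ 1 ∧
      (Nat.card { a : Fin n → G //
          (List.ofFn a).prod = (List.ofFn fun i => a (σ i)).prod } : ℚ) >
        (1 / 2 + 1 / 8) * (Nat.card G : ℚ) ^ n) :
    ∀ g h : G, g * h = h * g := by
  by_contra hc
  push_neg at hc
  have hna : ¬ ∀ a b : G, a * b = b * a := by
    obtain ⟨g, h', hgh⟩ := hc
    exact fun hall => hgh (hall g h')
  obtain ⟨n, hn, σ, hσ, hgt⟩ := h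
  have CB := eight_mul_commpairs_le G hna
  have key := key_count G n σ hσ CB
  have hcast : (8 : ℚ) * (Nat.card {a : Fin n → G //
      (List.ofFn a).prod = (List.ofFn fun i => a (σ i)).prod} : ℚ)
      ≤ 5 * (Nat.card G : ℚ) ^ n := by exact_mod_cast key
  linarith
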